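/- Let A be a nondeterministic automaton with n states. For each word w ∈ Σ⁺ and each k ≥ 1, the number of runs in the 'k-tuple automaton' A_{≥k} on w from its initial state to its final states equals the number of strictly increasing (in lexicographic order on state sequences) k-tuples (ρ¹ ≺ ρ² ≺ ⋯ ≺ ρᵏ) of accepting runs of A on w. In particular, A_{≥k} accepts exactly the words admitting at least k accepting runs in A. -/

import Mathlib

variable {Q Q' A R : Type*}

/-- `RunFrom Δ p w ρ`: `ρ` is the list of states visited after `p` along a run
reading `w` that starts in `p`. -/
def RunFrom (Δ : Q → A → Q → Prop) : Q → List A → List Q → Prop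
  | _, [], [] => True
  | p, a :: w, q :: ρ => Δ p a q ∧ RunFrom Δ q w ρ
  | _, _, _ => False

/-- There is a run from `p` to `q` reading `w`. -/
def HasRun (Δ : Q → A → Q → Prop) (p : Q) (w : List A) (q : Q) : Prop :=
  ∃ ρ, RunFrom Δ p w ρ ∧ (p :: ρ).getLast (List.cons_ne_nil _ _) = q

/-- `m`-fold power of a word. -/
def wpow (u : List A) (m : ℕ) : List A := (List.replicate m u).flatten

/-- Aperiodicity of a nondeterministic automaton. -/
def Aperiodic (Δ : Q → A → Q → Prop) : Prop :=
  ∃ m, 1 ≤ m ∧ ∀ (p q : Q) (u : List A), u ≠ [] →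
    (HasRun Δ p (wpow u m) q ↔ HasRun Δ p (wpow u (m + 1)) q)

/-- `p` and `q` are in the same strongly connected component. -/
def SameSCC (Δ : Q → A → Q → Prop) (p q : Q) : Prop :=
  p = q ∨ ((∃ u : List A, u ≠ [] ∧ HasRun Δ p u q) ∧ (∃ v : List A, v ≠ [] ∧ HasRun Δ q v p))

/-- The automaton is unambiguous from `p` to `q`. -/
def UnambFromTo (Δ : Q → A → Q → Prop) (p q : Q) : Prop :=
  ∀ (u : List A) (ρ₁ ρ₂ : List Q), u ≠ [] →
    RunFrom Δ p u ρ₁ → RunFrom Δ p u ρ₂ →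
    (p :: ρ₁).getLast (List.cons_ne_nil _ _) = q →
    (p :: ρ₂).getLast (List.cons_ne_nil _ _) = q → ρ₁ = ρ₂

def SCCUnambiguous (Δ : Q → A → Q → Prop) : Prop :=
  ∀ p q : Q, SameSCC Δ p q → UnambFromTo Δ p q

/-- The set of accepting runs on `w`, represented as pairs of an initial state and
the list of subsequently visited states. -/
def AccRuns (Δ : Q → A → Q → Prop) (I F : Set Q) (w : List A) : Set (Q × List Q) :=
  {x | x.1 ∈ I ∧ RunFrom Δ x.1 w x.2 ∧ (x.1 :: x.2).getLast (List.cons_ne_nil _ _) ∈ F}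

/-- The sequence of weights along a run. -/
def wgtSeq (wgt : Q → A → Q → R) : Q → List A → List Q → List R
  | p, a :: w, q :: ρ => wgt p a q :: wgtSeq wgt q w ρ
  | _, _, _ => []


/-- Transition relation of the automaton `A_{≥k}` tracking `k` lexicographically
ordered runs of `A` together with difference bits. -/
def AkTrans (Δ : Q → A → Q → Prop) (lt : Q → Q → Prop) (k : ℕ) :
    ((Fin k → Q) × (Fin (k - 1) → Bool)) → A → ((Fin k → Q) × (Fin (k - 1) → Bool)) → Prop :=
  fun x a y =>
    (∀ ℓ : Fin k, Δ (x.1 ℓ) a (y.1 ℓ)) ∧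
    ∀ ℓ : Fin (k - 1),
      (x.2 ℓ = false ∧
        y.1 ⟨ℓ.val, by have := ℓ.isLt; omega⟩ = y.1 ⟨ℓ.val + 1, by have := ℓ.isLt; omega⟩ ∧
        y.2 ℓ = false) ∨
      ((x.2 ℓ = true ∨
          lt (y.1 ⟨ℓ.val, by have := ℓ.isLt; omega⟩) (y.1 ⟨ℓ.val + 1, by have := ℓ.isLt; omega⟩)) ∧
        y.2 ℓ = true)

/-- The initial state of `A_{≥k}`. -/
def AkInit (q₀ : Q) (k : ℕ) : (Fin k → Q) × (Fin (k - 1) → Bool) :=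
  (fun _ => q₀, fun _ => false)

/-- The set of final states of `A_{≥k}`. -/
def AkFinal (F : Set Q) (k : ℕ) : Set ((Fin k → Q) × (Fin (k - 1) → Bool)) :=
  {x | (∀ ℓ, x.1 ℓ ∈ F) ∧ ∀ ℓ, x.2 ℓ = true}

section AkAux

open List

variable {S A' : Type*}

theorem runFrom_nil_iff {Δ : S → A' → S → Prop} {p : S} {ρ : List S} :
    RunFrom Δ p [] ρ ↔ ρ = [] := by
  cases ρ <;> simp [RunFrom]

theorem runFrom_cons {Δ : S → A' → S → Prop} {p q : S} {a : A'} {w : List A'} {ρ : List S} :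
    RunFrom Δ p (a :: w) (q :: ρ) ↔ Δ p a q ∧ RunFrom Δ q w ρ := Iff.rfl

theorem runFrom_cons_iff {Δ : S → A' → S → Prop} {p : S} {a : A'} {w : List A'} {ρ : List S} :
    RunFrom Δ p (a :: w) ρ ↔ ∃ q ρ', ρ = q :: ρ' ∧ Δ p a q ∧ RunFrom Δ q w ρ' := by
  cases ρ with
  | nil => simp [RunFrom]
  | cons q ρ =>
    simp only [RunFrom, List.cons.injEq]
    constructor
    · rintro ⟨h1, h2⟩; exact ⟨q, ρ, ⟨rfl, rfl⟩, h1, h2⟩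
    · rintro ⟨q', ρ', ⟨rfl, rfl⟩, h1, h2⟩; exact ⟨h1, h2⟩

theorem runFrom_length {Δ : S → A' → S → Prop} :
    ∀ {w : List A'} {p : S} {ρ : List S}, RunFrom Δ p w ρ → ρ.length = w.length := by
  intro w
  induction w with
  | nil => intro p ρ h; simp [runFrom_nil_iff.1 h]
  | cons a w ih =>
    intro p ρ h
    obtain ⟨q, ρ', rfl, -, h⟩ := runFrom_cons_iff.1 h
    simp [ih h]

theorem getLast_cons_map {α β : Type*} (f : α → β) :
    ∀ (x : α) (ρ : List α),
      ((f x :: ρ.map f).getLast (List.cons_ne_nil _ _)) =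
        f ((x :: ρ).getLast (List.cons_ne_nil _ _))
  | _, [] => rfl
  | x, y :: ρ => by
    rw [List.map_cons, List.getLast_cons (by simp : (f y :: ρ.map f) ≠ []),
      List.getLast_cons (List.cons_ne_nil y ρ)]
    exact getLast_cons_map f y ρ

theorem lex_irrefl {α : Type*} {r : α → α → Prop} [IsIrrefl α r] :
    ∀ (l : List α), ¬ List.Lex r l l
  | _, List.Lex.rel h => irrefl _ h
  | _ :: l, List.Lex.cons h => lex_irrefl l h

theorem lex_cons_cases {α : Type*} {r : α → α → Prop} {a b : α} {l₁ l₂ : List α}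
    (h : List.Lex r (a :: l₁) (b :: l₂)) : r a b ∨ (a = b ∧ List.Lex r l₁ l₂) := by
  cases h with
  | rel h => exact Or.inl h
  | cons h => exact Or.inr ⟨rfl, h⟩

/-- Lower index of a pair of adjacent tracks. -/
def flo {k : ℕ} (ℓ : Fin (k - 1)) : Fin k := ⟨ℓ.val, by have := ℓ.isLt; omega⟩

/-- Upper index of a pair of adjacent tracks. -/
def fhi {k : ℕ} (ℓ : Fin (k - 1)) : Fin k := ⟨ℓ.val + 1, by have := ℓ.isLt; omega⟩

variable {Q : Type*} {Δ : Q → A' → Q → Prop} {lt : Q → Q → Prop} {k : ℕ}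

theorem akTrans_iff' {x : (Fin k → Q) × (Fin (k - 1) → Bool)} {q : Fin k → Q}
    {c : Fin (k - 1) → Bool} {a : A'} :
    AkTrans Δ lt k x a (q, c) ↔
      (∀ ℓ : Fin k, Δ (x.1 ℓ) a (q ℓ)) ∧
        ∀ ℓ : Fin (k - 1),
          (x.2 ℓ = false ∧ q (flo ℓ) = q (fhi ℓ) ∧ c ℓ = false) ∨
          ((x.2 ℓ = true ∨ lt (q (flo ℓ)) (q (fhi ℓ))) ∧ c ℓ = true) := Iff.rfl

theorem akTrans_bits_eq [IsIrrefl Q lt] {x : (Fin k → Q) × (Fin (k - 1) → Bool)}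
    {a : A'} {q : Fin k → Q} {c₁ c₂ : Fin (k - 1) → Bool}
    (h₁ : AkTrans Δ lt k x a (q, c₁)) (h₂ : AkTrans Δ lt k x a (q, c₂)) : c₁ = c₂ := by
  funext ℓ
  rcases (akTrans_iff'.1 h₁).2 ℓ with ⟨hb, he, h1⟩ | ⟨hb, h1⟩ <;>
    rcases (akTrans_iff'.1 h₂).2 ℓ with ⟨hb', he', h2⟩ | ⟨hb', h2⟩
  · rw [h1, h2]
  · rcases hb' with h | h
    · rw [hb] at h; cases h
    · rw [he] at h; exact absurd h (irrefl _)
  · rcases hb with h | h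
    · rw [hb'] at h; cases h
    · rw [he'] at h; exact absurd h (irrefl _)
  · rw [h1, h2]

theorem ak_run_unique [IsIrrefl Q lt] :
    ∀ {w : List A'} {x : (Fin k → Q) × (Fin (k - 1) → Bool)} {ρ₁ ρ₂},
      RunFrom (AkTrans Δ lt k) x w ρ₁ → RunFrom (AkTrans Δ lt k) x w ρ₂ →
      (∀ ℓ : Fin k, ρ₁.map (fun s => s.1 ℓ) = ρ₂.map (fun s => s.1 ℓ)) → ρ₁ = ρ₂ := by
  intro w
  induction w with
  | nil => intro x ρ₁ ρ₂ h₁ h₂ _; rw [runFrom_nil_iff.1 h₁, runFrom_nil_iff.1 h₂]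
  | cons a w ih =>
    intro x ρ₁ ρ₂ h₁ h₂ hproj
    obtain ⟨⟨q₁, c₁⟩, ρ₁', rfl, ht₁, hr₁⟩ := runFrom_cons_iff.1 h₁
    obtain ⟨⟨q₂, c₂⟩, ρ₂', rfl, ht₂, hr₂⟩ := runFrom_cons_iff.1 h₂
    have h' : ∀ ℓ : Fin k, q₁ ℓ = q₂ ℓ ∧
        ρ₁'.map (fun s => s.1 ℓ) = ρ₂'.map (fun s => s.1 ℓ) := by
      intro ℓ; simpa using hproj ℓ
    have hq : q₁ = q₂ := funext fun ℓ => (h' ℓ).1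
    subst hq
    have hc : c₁ = c₂ := akTrans_bits_eq ht₁ ht₂
    subst hc
    rw [ih hr₁ hr₂ (fun ℓ => (h' ℓ).2)]

theorem ak_proj_run :
    ∀ {w : List A'} {x : (Fin k → Q) × (Fin (k - 1) → Bool)} {ρ},
      RunFrom (AkTrans Δ lt k) x w ρ →
        ∀ ℓ : Fin k, RunFrom Δ (x.1 ℓ) w (ρ.map (fun s => s.1 ℓ)) := by
  intro w
  induction w with
  | nil => intro x ρ h ℓ; rw [runFrom_nil_iff.1 h]; trivial
  | cons a w ih =>
    intro x ρ h ℓ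
    obtain ⟨⟨q, c⟩, ρ', rfl, ht, hr⟩ := runFrom_cons_iff.1 h
    rw [List.map_cons, runFrom_cons]
    exact ⟨(akTrans_iff'.1 ht).1 ℓ, ih hr ℓ⟩

theorem ak_last_bits [IsIrrefl Q lt] :
    ∀ {w : List A'} {x : (Fin k → Q) × (Fin (k - 1) → Bool)} {ρ},
      RunFrom (AkTrans Δ lt k) x w ρ → ∀ ℓ : Fin (k - 1),
        ((((x :: ρ).getLast (List.cons_ne_nil _ _)).2 ℓ = true) ↔
          (x.2 ℓ = true ∨
            ρ.map (fun s => s.1 (flo ℓ)) ≠ ρ.map (fun s => s.1 (fhi ℓ)))) := by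
  intro w
  induction w with
  | nil => intro x ρ h ℓ; rw [runFrom_nil_iff.1 h]; simp
  | cons a w ih =>
    intro x ρ h ℓ
    obtain ⟨⟨q, c⟩, ρ', rfl, ht, hr⟩ := runFrom_cons_iff.1 h
    rw [List.getLast_cons (List.cons_ne_nil _ _)]
    have hstep : (c ℓ = true) ↔ (x.2 ℓ = true ∨ q (flo ℓ) ≠ q (fhi ℓ)) := by
      rcases (akTrans_iff'.1 ht).2 ℓ with ⟨hb, he, hc⟩ | ⟨hor, hc⟩
      · simp [hc, hb, he]
      · simp only [hc, true_iff]
        rcases hor with h | h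
        · exact Or.inl h
        · exact Or.inr (fun hEq => absurd (hEq ▸ h) (irrefl _))
    rw [ih hr ℓ]
    dsimp only
    rw [hstep]
    simp only [List.map_cons, ne_eq, List.cons.injEq, not_and]
    tauto

theorem ak_first_lex [IsIrrefl Q lt] :
    ∀ {w : List A'} {x : (Fin k → Q) × (Fin (k - 1) → Bool)} {ρ},
      RunFrom (AkTrans Δ lt k) x w ρ → ∀ ℓ : Fin (k - 1), x.2 ℓ = false →
        ρ.map (fun s => s.1 (flo ℓ)) ≠ ρ.map (fun s => s.1 (fhi ℓ)) →
        List.Lex lt (ρ.map (fun s => s.1 (flo ℓ))) (ρ.map (fun s => s.1 (fhi ℓ))) := by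
  intro w
  induction w with
  | nil => intro x ρ h ℓ _ hne; rw [runFrom_nil_iff.1 h] at hne; simp at hne
  | cons a w ih =>
    intro x ρ h ℓ hb hne
    obtain ⟨⟨q, c⟩, ρ', rfl, ht, hr⟩ := runFrom_cons_iff.1 h
    rcases (akTrans_iff'.1 ht).2 ℓ with ⟨hb', he, hc⟩ | ⟨hor, hc⟩
    · have hne' : ρ'.map (fun s => s.1 (flo ℓ)) ≠ ρ'.map (fun s => s.1 (fhi ℓ)) := by
        intro hEq; apply hne
        rw [List.map_cons, List.map_cons]; dsimp only; rw [he, hEq]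
      rw [List.map_cons, List.map_cons]; dsimp only; rw [he]
      exact List.Lex.cons (ih hr ℓ hc hne')
    · rcases hor with h | h
      · rw [hb] at h; cases h
      · rw [List.map_cons, List.map_cons]
        exact List.Lex.rel h

theorem ak_exists_run [IsIrrefl Q lt] :
    ∀ {w : List A'} (p : Fin k → Q) (b : Fin (k - 1) → Bool) (rs : Fin k → List Q),
      (∀ ℓ : Fin k, RunFrom Δ (p ℓ) w (rs ℓ)) →
      (∀ ℓ : Fin (k - 1), b ℓ = true ∨ rs (flo ℓ) = rs (fhi ℓ) ∨
        List.Lex lt (rs (flo ℓ)) (rs (fhi ℓ))) →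
      ∃ ρ, RunFrom (AkTrans Δ lt k) (p, b) w ρ ∧
        ∀ ℓ : Fin k, ρ.map (fun s => s.1 ℓ) = rs ℓ := by
  intro w
  induction w with
  | nil =>
    intro p b rs hrun _
    exact ⟨[], trivial, fun ℓ => by rw [runFrom_nil_iff.1 (hrun ℓ)]; rfl⟩
  | cons a w ih =>
    intro p b rs hrun hok
    classical
    have hd := fun ℓ => runFrom_cons_iff.1 (hrun ℓ)
    choose q rest hrs hΔ hrun' using hd
    obtain ⟨c, hctrue, hcfalse⟩ : ∃ c : Fin (k - 1) → Bool,
        (∀ ℓ, c ℓ = true ↔ (b ℓ = true ∨ q (flo ℓ) ≠ q (fhi ℓ))) ∧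
        (∀ ℓ, c ℓ = false ↔ (b ℓ = false ∧ q (flo ℓ) = q (fhi ℓ))) := by
      refine ⟨fun ℓ => decide (b ℓ = true ∨ q (flo ℓ) ≠ q (fhi ℓ)),
        fun ℓ => ?_, fun ℓ => ?_⟩
      · simp only [decide_eq_true_eq]
      · simp only [decide_eq_false_iff_not, not_or, not_not, Bool.not_eq_true]
    have htrans : AkTrans Δ lt k (p, b) a (q, c) := by
      rw [akTrans_iff']
      refine ⟨fun ℓ => hΔ ℓ, fun ℓ => ?_⟩
      by_cases hcond : b ℓ = true ∨ q (flo ℓ) ≠ q (fhi ℓ)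
      · refine Or.inr ⟨?_, (hctrue ℓ).2 hcond⟩
        rcases hcond with h | h
        · exact Or.inl h
        · rcases hok ℓ with h' | h' | h'
          · exact Or.inl h'
          · rw [hrs (flo ℓ), hrs (fhi ℓ)] at h'
            exact absurd (List.head_eq_of_cons_eq h') h
          · rw [hrs (flo ℓ), hrs (fhi ℓ)] at h'
            rcases lex_cons_cases h' with hlt | ⟨heq, -⟩
            · exact Or.inr hlt
            · exact absurd heq h
      · push_neg at hcond
        have hb0 : b ℓ = false := by simpa using hcond.1
        exact Or.inl ⟨hb0, hcond.2, (hcfalse ℓ).2 ⟨hb0, hcond.2⟩⟩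
    have hok' : ∀ ℓ : Fin (k - 1), c ℓ = true ∨ rest (flo ℓ) = rest (fhi ℓ) ∨
        List.Lex lt (rest (flo ℓ)) (rest (fhi ℓ)) := by
      intro ℓ
      by_cases hcond : b ℓ = true ∨ q (flo ℓ) ≠ q (fhi ℓ)
      · exact Or.inl ((hctrue ℓ).2 hcond)
      · push_neg at hcond
        have hb0 : b ℓ = false := by simpa using hcond.1
        rcases hok ℓ with h' | h' | h'
        · rw [hb0] at h'; cases h'
        · rw [hrs (flo ℓ), hrs (fhi ℓ)] at h'
          exact Or.inr (Or.inl (List.tail_eq_of_cons_eq h'))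
        · rw [hrs (flo ℓ), hrs (fhi ℓ)] at h'
          rcases lex_cons_cases h' with hlt | ⟨-, hlex⟩
          · exact absurd (hcond.2 ▸ hlt) (irrefl _)
          · exact Or.inr (Or.inr hlex)
    obtain ⟨ρ', hρ', hproj⟩ := ih q c rest hrun' hok'
    refine ⟨(q, c) :: ρ', runFrom_cons.2 ⟨htrans, hρ'⟩, fun ℓ => ?_⟩
    rw [List.map_cons, hproj ℓ, ← hrs ℓ]

theorem strictMono_of_chain {β : Type*} [Preorder β] {k : ℕ} {f : Fin k → β}
    (h : ∀ (i : ℕ) (hi : i + 1 < k), f ⟨i, by omega⟩ < f ⟨i + 1, hi⟩) : StrictMono f := by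
  have key : ∀ (d a : ℕ) (h2 : a + d + 1 < k), f ⟨a, by omega⟩ < f ⟨a + d + 1, h2⟩ := by
    intro d
    induction d with
    | zero => exact fun a h2 => h a h2
    | succ d ihd =>
      intro a h2
      exact (ihd a (by omega)).trans (h (a + d + 1) h2)
  rintro ⟨a, ha⟩ ⟨b, hb⟩ hab
  have hab' : a < b := hab
  obtain ⟨d, rfl⟩ : ∃ d, b = a + d + 1 := ⟨b - a - 1, by omega⟩
  exact key d a hb

end AkAux

/-- The number of runs of `A_{≥k}` on `w` from its initial state to its final states
equals the number of lexicographically strictly increasing `k`-tuples of accepting runs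
of `A` on `w`; in particular, `A_{≥k}` accepts exactly the words admitting at least `k`
accepting runs in `A`. -/
theorem ak_counts_k_tuples_of_runs [Fintype Q] (Δ : Q → A → Q → Prop)
    (lt : Q → Q → Prop) [IsStrictTotalOrder Q lt] (q₀ : Q) (F : Set Q)
    (k : ℕ) (hk : 1 ≤ k) (w : List A) (hw : w ≠ []) :
    {ρ : List ((Fin k → Q) × (Fin (k - 1) → Bool)) |
        RunFrom (AkTrans Δ lt k) (AkInit q₀ k) w ρ ∧
          (AkInit q₀ k :: ρ).getLast (List.cons_ne_nil _ _) ∈ AkFinal F k}.ncard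
      = {r : Fin k → List Q |
          (∀ ℓ, RunFrom Δ q₀ w (r ℓ) ∧
            (q₀ :: r ℓ).getLast (List.cons_ne_nil _ _) ∈ F) ∧
          ∀ ℓ : Fin (k - 1),
            List.Lex lt (q₀ :: r ⟨ℓ.val, by have := ℓ.isLt; omega⟩)
              (q₀ :: r ⟨ℓ.val + 1, by have := ℓ.isLt; omega⟩)}.ncard
    ∧ ((∃ ρ, RunFrom (AkTrans Δ lt k) (AkInit q₀ k) w ρ ∧
          (AkInit q₀ k :: ρ).getLast (List.cons_ne_nil _ _) ∈ AkFinal F k) ↔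
        k ≤ {ρ : List Q | RunFrom Δ q₀ w ρ ∧
              (q₀ :: ρ).getLast (List.cons_ne_nil _ _) ∈ F}.ncard) := by
  classical
  let Φ : List ((Fin k → Q) × (Fin (k - 1) → Bool)) → (Fin k → List Q) :=
    fun ρ ℓ => ρ.map (fun s => s.1 ℓ)
  have hinj : Set.InjOn Φ {ρ : List ((Fin k → Q) × (Fin (k - 1) → Bool)) |
      RunFrom (AkTrans Δ lt k) (AkInit q₀ k) w ρ ∧
        (AkInit q₀ k :: ρ).getLast (List.cons_ne_nil _ _) ∈ AkFinal F k} := by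
    intro ρ₁ h₁ ρ₂ h₂ hEq
    exact ak_run_unique h₁.1 h₂.1 (fun ℓ => congrFun hEq ℓ)
  have himg : Φ '' {ρ : List ((Fin k → Q) × (Fin (k - 1) → Bool)) |
        RunFrom (AkTrans Δ lt k) (AkInit q₀ k) w ρ ∧
          (AkInit q₀ k :: ρ).getLast (List.cons_ne_nil _ _) ∈ AkFinal F k}
      = {r : Fin k → List Q |
          (∀ ℓ, RunFrom Δ q₀ w (r ℓ) ∧
            (q₀ :: r ℓ).getLast (List.cons_ne_nil _ _) ∈ F) ∧
          ∀ ℓ : Fin (k - 1),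
            List.Lex lt (q₀ :: r ⟨ℓ.val, by have := ℓ.isLt; omega⟩)
              (q₀ :: r ⟨ℓ.val + 1, by have := ℓ.isLt; omega⟩)} := by
    ext rs
    constructor
    · rintro ⟨ρ, ⟨hrun, hfin⟩, rfl⟩
      refine ⟨fun ℓ => ⟨ak_proj_run hrun ℓ, ?_⟩, fun ℓ => ?_⟩
      · exact (getLast_cons_map (fun s : (Fin k → Q) × (Fin (k - 1) → Bool) => s.1 ℓ)
          (AkInit q₀ k) ρ).symm ▸ hfin.1 ℓ
      · have hne := (ak_last_bits hrun ℓ).1 (hfin.2 ℓ)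
        have hne' : ρ.map (fun s => s.1 (flo ℓ)) ≠ ρ.map (fun s => s.1 (fhi ℓ)) := by
          rcases hne with h | h
          · exact absurd h (by simp [AkInit])
          · exact h
        exact List.Lex.cons (ak_first_lex hrun ℓ rfl hne')
    · rintro ⟨hruns, hlex⟩
      have hok : ∀ ℓ : Fin (k - 1), (fun _ : Fin (k - 1) => false) ℓ = true ∨
          rs (flo ℓ) = rs (fhi ℓ) ∨ List.Lex lt (rs (flo ℓ)) (rs (fhi ℓ)) := by
        intro ℓ
        have hlex' : List.Lex lt (q₀ :: rs (flo ℓ)) (q₀ :: rs (fhi ℓ)) := hlex ℓ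
        rcases lex_cons_cases hlex' with h | ⟨-, h⟩
        · exact absurd h (irrefl _)
        · exact Or.inr (Or.inr h)
      obtain ⟨ρ, hρ, hproj⟩ :=
        ak_exists_run (fun _ => q₀) (fun _ => false) rs (fun ℓ => (hruns ℓ).1) hok
      have hρ' : RunFrom (AkTrans Δ lt k) (AkInit q₀ k) w ρ := hρ
      refine ⟨ρ, ⟨hρ', ?_, ?_⟩, ?_⟩
      · intro ℓ
        have h2 : ((AkInit q₀ k :: ρ).getLast (List.cons_ne_nil _ _)).1 ℓ
            = (q₀ :: rs ℓ).getLast (List.cons_ne_nil _ _) := by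
          rw [← hproj ℓ]
          exact (getLast_cons_map (fun s : (Fin k → Q) × (Fin (k - 1) → Bool) => s.1 ℓ)
            (AkInit q₀ k) ρ).symm
        rw [h2]
        exact (hruns ℓ).2
      · intro ℓ
        refine (ak_last_bits hρ' ℓ).2 (Or.inr ?_)
        rw [hproj (flo ℓ), hproj (fhi ℓ)]
        intro hEq
        have hlex' : List.Lex lt (q₀ :: rs (flo ℓ)) (q₀ :: rs (fhi ℓ)) := hlex ℓ
        rw [hEq] at hlex'
        exact lex_irrefl _ hlex'
      · funext ℓ
        exact hproj ℓ
  have hT : {ρ : List Q | RunFrom Δ q₀ w ρ ∧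
      (q₀ :: ρ).getLast (List.cons_ne_nil _ _) ∈ F}.Finite :=
    Set.Finite.subset (List.finite_length_eq Q w.length) (fun ρ hρ => runFrom_length hρ.1)
  haveI : IsStrictTotalOrder (List Q) (List.Lex lt) := { isStrictWeakOrder_of_isOrderConnected with }
  letI : LinearOrder (List Q) := linearOrderOfSTO (List.Lex lt)
  constructor
  · rw [← himg, Set.ncard_image_of_injOn hinj]
  · constructor
    · rintro ⟨ρ, hρ⟩
      have h2 : Φ ρ ∈ {r : Fin k → List Q |
          (∀ ℓ, RunFrom Δ q₀ w (r ℓ) ∧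
            (q₀ :: r ℓ).getLast (List.cons_ne_nil _ _) ∈ F) ∧
          ∀ ℓ : Fin (k - 1),
            List.Lex lt (q₀ :: r ⟨ℓ.val, by have := ℓ.isLt; omega⟩)
              (q₀ :: r ⟨ℓ.val + 1, by have := ℓ.isLt; omega⟩)} := by
        rw [← himg]
        exact Set.mem_image_of_mem Φ hρ
      obtain ⟨hruns, hlex⟩ := h2
      have hmono : StrictMono (Φ ρ) := by
        refine strictMono_of_chain (fun i hi => ?_)
        have h3 : List.Lex lt (q₀ :: Φ ρ (flo ⟨i, by omega⟩)) (q₀ :: Φ ρ (fhi ⟨i, by omega⟩)) :=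
          hlex ⟨i, by omega⟩
        exact List.lex_cons_iff.1 h3
      calc k = (Finset.univ : Finset (Fin k)).card := by simp
        _ ≤ hT.toFinset.card := by
            refine Finset.card_le_card_of_injOn (Φ ρ) (fun i _ => ?_) hmono.injective.injOn
            exact hT.mem_toFinset.2 (hruns i)
        _ = _ := (Set.ncard_eq_toFinset_card _ hT).symm
    · intro hk'
      rw [Set.ncard_eq_toFinset_card _ hT] at hk'
      obtain ⟨t, hts, htc⟩ := Finset.exists_subset_card_eq hk'
      have hmem : ∀ i : Fin k, (RunFrom Δ q₀ w (t.orderEmbOfFin htc i) ∧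
          (q₀ :: t.orderEmbOfFin htc i).getLast (List.cons_ne_nil _ _) ∈ F) :=
        fun i => hT.mem_toFinset.1 (hts (t.orderEmbOfFin_mem htc i))
      have hrs : (fun i => t.orderEmbOfFin htc i) ∈ {r : Fin k → List Q |
          (∀ ℓ, RunFrom Δ q₀ w (r ℓ) ∧
            (q₀ :: r ℓ).getLast (List.cons_ne_nil _ _) ∈ F) ∧
          ∀ ℓ : Fin (k - 1),
            List.Lex lt (q₀ :: r ⟨ℓ.val, by have := ℓ.isLt; omega⟩)
              (q₀ :: r ⟨ℓ.val + 1, by have := ℓ.isLt; omega⟩)} := by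
        refine ⟨fun i => hmem i, fun ℓ => ?_⟩
        refine List.Lex.cons ?_
        have h4 : t.orderEmbOfFin htc (flo ℓ) < t.orderEmbOfFin htc (fhi ℓ) :=
          (t.orderEmbOfFin htc).strictMono (Fin.mk_lt_mk.2 (Nat.lt_succ_self _))
        exact h4
      rw [← himg] at hrs
      obtain ⟨ρ, hρ, -⟩ := hrs
      exact ⟨ρ, hρ⟩
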